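/- For every s ≥ 1 and r ≥ 1, the empirical Rademacher complexity of F_{s,r} satisfies R̂(F_{s,r}) = (2√R/(TN)) · E_σ[ sup_{θ ∈ ℝ^M, θ_m ≥ 0, ‖θ‖_r ≤ 1} ‖ ( √(Σ_{m=1}^M θ_m u_t^m) )_{t=1}^T ‖_{s*} ], where u_t^m = ‖Σ_{i=1}^N σ_t^i φ_{m,t}^i‖² (equivalently u_t^m = σ_t′ K_t^m σ_t with K_t^m the Gram matrix of φ_{m,t}^1,…,φ_{m,t}^N) and the ℓ_{s*} norm on ℝ^T is the maximum norm when s = 1. -/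

import Mathlib

open scoped BigOperators
open RealInnerProductSpace

noncomputable section

/-- The sign `+1`/`-1` associated with a Boolean, used to realize Rademacher variables. -/
def sgn (b : Bool) : ℝ := if b then 1 else -1

/-- Expectation over i.i.d. Rademacher variables `σ_t^i` (`t = 1,…,T`, `i = 1,…,N`),
realized as the uniform average over all sign patterns. -/
def Eσ (T N : ℕ) (f : (Fin T → Fin N → Bool) → ℝ) : ℝ :=
  (∑ σ : Fin T → Fin N → Bool, f σ) / (Fintype.card (Fin T → Fin N → Bool) : ℝ)

/-- Admissibility of a triple `(w, θ, λ)` for the multi-kernel hypothesis class `F_{s,r}`: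
`θ ⪰ 0` with `‖θ‖_r ≤ 1`, `λ ⪰ 0` with `‖λ‖_s ≤ 1`, and `Σ_m ‖w_t^m‖² ≤ λ_t² R` for all `t`. -/
def MKadm {M T : ℕ} (H : Fin M → Type*) [∀ m, NormedAddCommGroup (H m)]
    [∀ m, InnerProductSpace ℝ (H m)] (s r R : ℝ)
    (w : Fin T → ∀ m, H m) (θ : Fin M → ℝ) (lam : Fin T → ℝ) : Prop :=
  (∀ m, 0 ≤ θ m) ∧ (∑ m, θ m ^ r) ≤ 1 ∧
    (∀ t, 0 ≤ lam t) ∧ (∑ t, lam t ^ s) ≤ 1 ∧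
    ∀ t, (∑ m, ‖w t m‖ ^ 2) ≤ lam t ^ 2 * R

/-- Empirical Rademacher complexity of the multi-kernel hypothesis class `F_{s,r}`, with
respect to the sampled feature vectors `φ_{m,t}^i`. -/
def ERCmk {M : ℕ} (H : Fin M → Type*) [∀ m, NormedAddCommGroup (H m)]
    [∀ m, InnerProductSpace ℝ (H m)] (T N : ℕ)
    (φ : ∀ m, Fin T → Fin N → H m) (s r R : ℝ) : ℝ :=
  Eσ T N (fun σ => sSup {v : ℝ |
    ∃ (w : Fin T → ∀ m, H m) (θ : Fin M → ℝ) (lam : Fin T → ℝ),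
      MKadm H s r R w θ lam ∧
      v = (2 / ((T : ℝ) * N)) *
        ∑ t, ∑ i, sgn (σ t i) * ∑ m, Real.sqrt (θ m) * ⟪w t m, φ m t i⟫})

/-- The `ℓ_q` norm on `ℝ^T` for finite `0 < q < ∞`. -/
def lqNorm {T : ℕ} (q : ℝ) (u : Fin T → ℝ) : ℝ := (∑ t, |u t| ^ q) ^ (1 / q)

/-- The `ℓ_{s*}` norm on `ℝ^T`, where `s* = s/(s-1)` is the Hölder conjugate of `s ≥ 1`;
for `s = 1` this is the `ℓ_∞` (maximum) norm. -/
def dualNorm {T : ℕ} (s : ℝ) (u : Fin T → ℝ) : ℝ :=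
  if s = 1 then ⨆ t, |u t| else lqNorm (s / (s - 1)) u

lemma dualNorm_zero {T : ℕ} (hT : 0 < T) {s : ℝ} (hs : 1 ≤ s) :
    dualNorm s (fun _ : Fin T => (0:ℝ)) = 0 := by
  have : Nonempty (Fin T) := ⟨⟨0, hT⟩⟩
  unfold dualNorm lqNorm
  split
  · simp
  · rename_i h1
    have hq : 0 < s / (s - 1) := by
      have : 1 < s := lt_of_le_of_ne hs (Ne.symm h1)
      exact div_pos (by linarith) (by linarith)
    rw [Finset.sum_congr rfl fun t _ => by
      rw [abs_zero, Real.zero_rpow hq.ne']]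
    simp only [Finset.sum_const_zero]
    exact Real.zero_rpow (by positivity)

lemma dualNorm_mono {T : ℕ} (hT : 0 < T) {s : ℝ} (hs : 1 ≤ s) {u v : Fin T → ℝ}
    (h : ∀ t, |u t| ≤ |v t|) : dualNorm s u ≤ dualNorm s v := by
  have : Nonempty (Fin T) := ⟨⟨0, hT⟩⟩
  unfold dualNorm lqNorm
  split
  · exact ciSup_le fun t =>
      (h t).trans (le_ciSup (f := fun t => |v t|) (Set.Finite.bddAbove (Set.finite_range _)) t)
  · rename_i h1
    have hq : 0 < s / (s - 1) := by
      have : 1 < s := lt_of_le_of_ne hs (Ne.symm h1)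
      exact div_pos (by linarith) (by linarith)
    exact Real.rpow_le_rpow
      (Finset.sum_nonneg fun t _ => Real.rpow_nonneg (abs_nonneg _) _)
      (Finset.sum_le_sum fun t _ => Real.rpow_le_rpow (abs_nonneg _) (h t) hq.le)
      (by positivity)

lemma hoelder_le {T : ℕ} (hT : 0 < T) {s : ℝ} (hs : 1 ≤ s) (lam b : Fin T → ℝ)
    (hlam : ∀ t, 0 ≤ lam t) (hsum : (∑ t, lam t ^ s) ≤ 1) (hb : ∀ t, 0 ≤ b t) :
    ∑ t, lam t * b t ≤ dualNorm s b := by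
  have hne : Nonempty (Fin T) := ⟨⟨0, hT⟩⟩
  rcases eq_or_lt_of_le hs with h1 | h1
  · unfold dualNorm
    rw [if_pos h1.symm]
    set S := ⨆ t, |b t| with hSdef
    have hS : ∀ t, b t ≤ S := fun t =>
      (le_abs_self _).trans (le_ciSup (f := fun t => |b t|) (Set.Finite.bddAbove (Set.finite_range _)) t)
    have hS0 : 0 ≤ S := le_trans (hb (Classical.arbitrary _)) (hS (Classical.arbitrary _))
    calc ∑ t, lam t * b t ≤ ∑ t, lam t * S :=
          Finset.sum_le_sum fun t _ => mul_le_mul_of_nonneg_left (hS t) (hlam t)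
      _ = (∑ t, lam t) * S := by rw [← Finset.sum_mul]
      _ ≤ 1 * S := by
          refine mul_le_mul_of_nonneg_right ?_ hS0
          calc (∑ t, lam t) = ∑ t, lam t ^ s := by
                refine Finset.sum_congr rfl fun t _ => ?_
                rw [← h1, Real.rpow_one]
            _ ≤ 1 := hsum
      _ = S := one_mul S
  · have hpq : s.HolderConjugate (s / (s - 1)) := Real.HolderConjugate.conjExponent h1
    unfold dualNorm lqNorm
    rw [if_neg (by linarith)]
    calc ∑ t, lam t * b t
        ≤ (∑ t, lam t ^ s) ^ (1/s) * (∑ t, b t ^ (s/(s-1))) ^ (1/(s/(s-1))) :=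
          Real.inner_le_Lp_mul_Lq_of_nonneg _ hpq (fun t _ => hlam t) (fun t _ => hb t)
      _ ≤ 1 * (∑ t, b t ^ (s/(s-1))) ^ (1/(s/(s-1))) := by
          refine mul_le_mul_of_nonneg_right
            (Real.rpow_le_one (Finset.sum_nonneg fun t _ => Real.rpow_nonneg (hlam t) _)
              hsum (by positivity)) ?_
          refine Real.rpow_nonneg (Finset.sum_nonneg fun t _ => Real.rpow_nonneg (hb t) _) _
      _ = (∑ t, |b t| ^ (s/(s-1))) ^ (1/(s/(s-1))) := by
          rw [one_mul]
          congr 1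
          exact Finset.sum_congr rfl fun t _ => by rw [abs_of_nonneg (hb t)]

lemma hoelder_achieve {T : ℕ} (hT : 0 < T) {s : ℝ} (hs : 1 ≤ s) (b : Fin T → ℝ)
    (hb : ∀ t, 0 ≤ b t) :
    ∃ lam : Fin T → ℝ, (∀ t, 0 ≤ lam t) ∧ (∑ t, lam t ^ s) ≤ 1 ∧
      (∑ t, lam t * b t) = dualNorm s b := by
  have hne : Nonempty (Fin T) := ⟨⟨0, hT⟩⟩
  rcases eq_or_lt_of_le hs with h1 | h1
  · obtain ⟨t0, ht0⟩ := Finite.exists_max b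
    refine ⟨fun t => if t = t0 then 1 else 0, fun t => by dsimp only; split <;> norm_num, ?_, ?_⟩
    · have : ∀ t : Fin T, (if t = t0 then (1:ℝ) else 0) ^ s = if t = t0 then (1:ℝ) else 0 := by
        intro t; split
        · exact Real.one_rpow s
        · exact Real.zero_rpow (by linarith)
      rw [Finset.sum_congr rfl fun t _ => this t]
      simp
    · unfold dualNorm
      rw [if_pos h1.symm]
      have hsum : (∑ t, (if t = t0 then (1:ℝ) else 0) * b t) = b t0 := by
        rw [Finset.sum_congr rfl (fun t _ => by rw [ite_mul, one_mul, zero_mul]),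
          Finset.sum_ite_eq' Finset.univ t0 b]
        simp
      rw [hsum]
      refine le_antisymm ?_ ?_
      · rw [← abs_of_nonneg (hb t0)]
        exact le_ciSup (f := fun t => |b t|) (Set.Finite.bddAbove (Set.finite_range _)) t0
      · exact ciSup_le fun t => by rw [abs_of_nonneg (hb t)]; exact ht0 t
  · by_cases hz : ∀ t, b t = 0
    · refine ⟨0, fun t => le_rfl, ?_, ?_⟩
      · rw [Finset.sum_congr rfl fun t _ => by
          rw [Pi.zero_apply, Real.zero_rpow (by linarith : s ≠ 0)]]
        simp
      · rw [show b = (fun _ : Fin T => (0:ℝ)) from funext hz, dualNorm_zero hT hs]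
        simp
    · push_neg at hz
      obtain ⟨t1, ht1⟩ := hz
      have hbt1 : 0 < b t1 := (hb t1).lt_of_ne (Ne.symm ht1)
      set q := s / (s - 1) with hqdef
      have hq1 : 1 < q := by
        rw [hqdef, lt_div_iff₀ (by linarith : (0:ℝ) < s - 1)]; linarith
      have hq0 : 0 < q := by linarith
      have hSq : 0 < ∑ t, b t ^ q :=
        Finset.sum_pos' (fun t _ => Real.rpow_nonneg (hb t) q)
          ⟨t1, Finset.mem_univ t1, Real.rpow_pos_of_pos hbt1 q⟩
      set B := (∑ t, b t ^ q) ^ (1/q) with hBdef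
      have hB : 0 < B := Real.rpow_pos_of_pos hSq _
      have hBq : B ^ q = ∑ t, b t ^ q := by
        rw [hBdef, ← Real.rpow_mul hSq.le, one_div, inv_mul_cancel₀ hq0.ne', Real.rpow_one]
      have hexp : (q - 1) * s = q := by
        have h2 : s - 1 ≠ 0 := by linarith
        rw [hqdef]; field_simp; ring
      refine ⟨fun t => (b t / B) ^ (q - 1),
        fun t => Real.rpow_nonneg (div_nonneg (hb t) hB.le) _, ?_, ?_⟩
      · have hcalc : (∑ t, ((b t / B) ^ (q-1)) ^ s) = 1 := by
          calc ∑ t, ((b t / B) ^ (q-1)) ^ s = ∑ t, (b t / B) ^ q := by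
                refine Finset.sum_congr rfl fun t _ => ?_
                rw [← Real.rpow_mul (div_nonneg (hb t) hB.le), hexp]
            _ = (∑ t, b t ^ q) / B ^ q := by
                rw [Finset.sum_div]
                exact Finset.sum_congr rfl fun t _ => Real.div_rpow (hb t) hB.le q
            _ = 1 := by rw [hBq, div_self hSq.ne']
        exact hcalc.le
      · have hval : ∀ t, (b t / B) ^ (q-1) * b t = b t ^ q / B ^ (q-1) := by
          intro t
          rcases eq_or_lt_of_le (hb t) with h0 | h0
          · rw [← h0]
            simp [Real.zero_rpow (by linarith : q - 1 ≠ 0), Real.zero_rpow hq0.ne']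
          · rw [Real.div_rpow (hb t) hB.le, div_mul_eq_mul_div, ← Real.rpow_add_one h0.ne' (q-1),
              sub_add_cancel]
        calc ∑ t, (b t / B) ^ (q-1) * b t = ∑ t, b t ^ q / B ^ (q-1) := by
              exact Finset.sum_congr rfl fun t _ => hval t
          _ = (∑ t, b t ^ q) / B ^ (q-1) := by rw [← Finset.sum_div]
          _ = B ^ q / B ^ (q-1) := by rw [hBq]
          _ = B := by rw [← Real.rpow_sub hB, show q - (q-1) = 1 by ring, Real.rpow_one]
          _ = dualNorm s b := by
              unfold dualNorm lqNorm
              rw [if_neg (by linarith), ← hqdef, hBdef]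
              congr 1
              exact Finset.sum_congr rfl fun t _ => by rw [abs_of_nonneg (hb t)]


lemma sSup_eq_of_mul (A B : Set ℝ) (K : ℝ) (hK : 0 < K) (hAne : A.Nonempty) (hBne : B.Nonempty)
    (hBbdd : BddAbove B)
    (hup : ∀ v ∈ A, ∃ v' ∈ B, v ≤ K * v')
    (hdown : ∀ v ∈ B, K * v ∈ A) :
    sSup A = K * sSup B := by
  have hAB : ∀ v ∈ A, v ≤ K * sSup B := fun v hv => by
    obtain ⟨v', hv', hle⟩ := hup v hv
    exact hle.trans (mul_le_mul_of_nonneg_left (le_csSup hBbdd hv') hK.le)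
  have hAbdd : BddAbove A := ⟨K * sSup B, fun v hv => hAB v hv⟩
  refine le_antisymm (csSup_le hAne hAB) ?_
  have h2 : sSup B ≤ sSup A / K := csSup_le hBne fun v hv =>
    (le_div_iff₀ hK).2 (by rw [mul_comm]; exact le_csSup hAbdd (hdown v hv))
  calc K * sSup B ≤ K * (sSup A / K) := mul_le_mul_of_nonneg_left h2 hK.le
    _ = sSup A := by field_simp

/-- For every `s ≥ 1` and `r ≥ 1`,
`R̂(F_{s,r}) = (2√R/(TN)) E_σ sup_{θ ⪰ 0, ‖θ‖_r ≤ 1} ‖(√(θ'u_t))_t‖_{s*}`, where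
`u_t^m = ‖Σ_i σ_t^i φ_{m,t}^i‖²`. -/
theorem ercmk_eq {M : ℕ} (H : Fin M → Type*) [∀ m, NormedAddCommGroup (H m)]
    [∀ m, InnerProductSpace ℝ (H m)]
    (T N : ℕ) (hT : 0 < T) (hN : 0 < N) (hM : 0 < M) (R : ℝ) (hR : 0 < R)
    (φ : ∀ m, Fin T → Fin N → H m) (s r : ℝ) (hs : 1 ≤ s) (hr : 1 ≤ r) :
    ERCmk H T N φ s r R =
      (2 * Real.sqrt R / ((T : ℝ) * N)) *
        Eσ T N (fun σ => sSup {v : ℝ | ∃ θ : Fin M → ℝ,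
          (∀ m, 0 ≤ θ m) ∧ (∑ m, θ m ^ r) ≤ 1 ∧
          v = dualNorm s (fun t =>
            Real.sqrt (∑ m, θ m * ‖∑ i, sgn (σ t i) • φ m t i‖ ^ 2))}) := by
  have hne : Nonempty (Fin T) := ⟨⟨0, hT⟩⟩
  have hTN : (0:ℝ) < (T:ℝ) * N :=
    mul_pos (by exact_mod_cast hT) (by exact_mod_cast hN)
  have hc0 : (0:ℝ) < 2 / ((T:ℝ)*N) := by positivity
  have hK0 : (0:ℝ) < 2 / ((T:ℝ)*N) * Real.sqrt R :=
    mul_pos hc0 (Real.sqrt_pos.2 hR)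
  have hrne : r ≠ 0 := by linarith
  have hsne : s ≠ 0 := by linarith
  have hθ1 : ∀ θ : Fin M → ℝ, (∀ m, 0 ≤ θ m) → (∑ m, θ m ^ r) ≤ 1 → ∀ m, θ m ≤ 1 := by
    intro θ hθ hθr m
    by_contra hgt; push_neg at hgt
    have h1 : (1:ℝ) < θ m ^ r := by
      calc (1:ℝ) = 1 ^ r := (Real.one_rpow r).symm
        _ < θ m ^ r := Real.rpow_lt_rpow zero_le_one hgt (by linarith)
    have h2 : θ m ^ r ≤ 1 :=
      le_trans (Finset.single_le_sum (fun m _ => Real.rpow_nonneg (hθ m) r)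
        (Finset.mem_univ m)) hθr
    linarith
  have main : ∀ σ : Fin T → Fin N → Bool,
      sSup {v : ℝ |
        ∃ (w : Fin T → ∀ m, H m) (θ : Fin M → ℝ) (lam : Fin T → ℝ),
          MKadm H s r R w θ lam ∧
          v = (2 / ((T : ℝ) * N)) *
            ∑ t, ∑ i, sgn (σ t i) * ∑ m, Real.sqrt (θ m) * ⟪w t m, φ m t i⟫}
      = (2 / ((T:ℝ)*N) * Real.sqrt R) * sSup {v : ℝ | ∃ θ : Fin M → ℝ,
          (∀ m, 0 ≤ θ m) ∧ (∑ m, θ m ^ r) ≤ 1 ∧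
          v = dualNorm s (fun t =>
            Real.sqrt (∑ m, θ m * ‖∑ i, sgn (σ t i) • φ m t i‖ ^ 2))} := by
    intro σ
    have hXnn : ∀ (θ : Fin M → ℝ), (∀ m, 0 ≤ θ m) → ∀ t,
        (0:ℝ) ≤ ∑ m, θ m * ‖∑ i, sgn (σ t i) • φ m t i‖ ^ 2 :=
      fun θ hθ t => Finset.sum_nonneg fun m _ => mul_nonneg (hθ m) (sq_nonneg _)
    have L0 : ∀ (w : Fin T → ∀ m, H m) (θ : Fin M → ℝ) (t : Fin T),
        (∑ i, sgn (σ t i) * ∑ m, Real.sqrt (θ m) * ⟪w t m, φ m t i⟫)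
          = ∑ m, Real.sqrt (θ m) * ⟪w t m, ∑ i, sgn (σ t i) • φ m t i⟫ := by
      intro w θ t
      calc (∑ i, sgn (σ t i) * ∑ m, Real.sqrt (θ m) * ⟪w t m, φ m t i⟫)
          = ∑ i, ∑ m, Real.sqrt (θ m) * (sgn (σ t i) * ⟪w t m, φ m t i⟫) := by
            refine Finset.sum_congr rfl fun i _ => ?_
            rw [Finset.mul_sum]
            exact Finset.sum_congr rfl fun m _ => by ring
        _ = ∑ m, ∑ i, Real.sqrt (θ m) * (sgn (σ t i) * ⟪w t m, φ m t i⟫) := Finset.sum_comm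
        _ = ∑ m, Real.sqrt (θ m) * ⟪w t m, ∑ i, sgn (σ t i) • φ m t i⟫ := by
            refine Finset.sum_congr rfl fun m _ => ?_
            rw [inner_sum, Finset.mul_sum]
            exact Finset.sum_congr rfl fun i _ => by rw [real_inner_smul_right]
    have upper : ∀ (w : Fin T → ∀ m, H m) (θ : Fin M → ℝ) (lam : Fin T → ℝ),
        MKadm H s r R w θ lam →
        (∑ t, ∑ i, sgn (σ t i) * ∑ m, Real.sqrt (θ m) * ⟪w t m, φ m t i⟫)
          ≤ Real.sqrt R * dualNorm s (fun t =>
              Real.sqrt (∑ m, θ m * ‖∑ i, sgn (σ t i) • φ m t i‖ ^ 2)) := by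
      rintro w θ lam ⟨hθ, hθr, hlam, hlams, hw⟩
      have step : ∀ t, (∑ m, Real.sqrt (θ m) * ⟪w t m, ∑ i, sgn (σ t i) • φ m t i⟫)
          ≤ lam t * (Real.sqrt R *
            Real.sqrt (∑ m, θ m * ‖∑ i, sgn (σ t i) • φ m t i‖ ^ 2)) := by
        intro t
        calc (∑ m, Real.sqrt (θ m) * ⟪w t m, ∑ i, sgn (σ t i) • φ m t i⟫)
            ≤ ∑ m, ‖w t m‖ * (Real.sqrt (θ m) * ‖∑ i, sgn (σ t i) • φ m t i‖) := by
              refine Finset.sum_le_sum fun m _ => ?_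
              have h1 := real_inner_le_norm (w t m) (∑ i, sgn (σ t i) • φ m t i)
              have h2 := mul_le_mul_of_nonneg_left h1 (Real.sqrt_nonneg (θ m))
              exact h2.trans_eq (by ring)
          _ ≤ Real.sqrt (∑ m, ‖w t m‖ ^ 2) *
              Real.sqrt (∑ m, (Real.sqrt (θ m) * ‖∑ i, sgn (σ t i) • φ m t i‖) ^ 2) :=
              Real.sum_mul_le_sqrt_mul_sqrt _ _ _
          _ = Real.sqrt (∑ m, ‖w t m‖ ^ 2) *
              Real.sqrt (∑ m, θ m * ‖∑ i, sgn (σ t i) • φ m t i‖ ^ 2) := by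
              congr 2
              exact Finset.sum_congr rfl fun m _ => by
                rw [mul_pow, Real.sq_sqrt (hθ m)]
          _ ≤ (lam t * Real.sqrt R) *
              Real.sqrt (∑ m, θ m * ‖∑ i, sgn (σ t i) • φ m t i‖ ^ 2) := by
              refine mul_le_mul_of_nonneg_right ?_ (Real.sqrt_nonneg _)
              calc Real.sqrt (∑ m, ‖w t m‖ ^ 2) ≤ Real.sqrt (lam t ^ 2 * R) :=
                    Real.sqrt_le_sqrt (hw t)
                _ = lam t * Real.sqrt R := by
                    rw [Real.sqrt_mul (sq_nonneg _), Real.sqrt_sq (hlam t)]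
          _ = lam t * (Real.sqrt R *
              Real.sqrt (∑ m, θ m * ‖∑ i, sgn (σ t i) • φ m t i‖ ^ 2)) := by ring
      calc (∑ t, ∑ i, sgn (σ t i) * ∑ m, Real.sqrt (θ m) * ⟪w t m, φ m t i⟫)
          = ∑ t, ∑ m, Real.sqrt (θ m) * ⟪w t m, ∑ i, sgn (σ t i) • φ m t i⟫ :=
            Finset.sum_congr rfl fun t _ => L0 w θ t
        _ ≤ ∑ t, lam t * (Real.sqrt R *
              Real.sqrt (∑ m, θ m * ‖∑ i, sgn (σ t i) • φ m t i‖ ^ 2)) :=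
            Finset.sum_le_sum fun t _ => step t
        _ = Real.sqrt R * ∑ t, lam t *
              Real.sqrt (∑ m, θ m * ‖∑ i, sgn (σ t i) • φ m t i‖ ^ 2) := by
            rw [Finset.mul_sum]
            exact Finset.sum_congr rfl fun t _ => by ring
        _ ≤ Real.sqrt R * dualNorm s (fun t =>
              Real.sqrt (∑ m, θ m * ‖∑ i, sgn (σ t i) • φ m t i‖ ^ 2)) :=
            mul_le_mul_of_nonneg_left
              (hoelder_le hT hs lam _ hlam hlams (fun t => Real.sqrt_nonneg _))
              (Real.sqrt_nonneg R)
    have achieve : ∀ θ : Fin M → ℝ, (∀ m, 0 ≤ θ m) → (∑ m, θ m ^ r) ≤ 1 →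
        ∃ (w : Fin T → ∀ m, H m) (lam : Fin T → ℝ),
          MKadm H s r R w θ lam ∧
          (∑ t, ∑ i, sgn (σ t i) * ∑ m, Real.sqrt (θ m) * ⟪w t m, φ m t i⟫)
            = Real.sqrt R * dualNorm s (fun t =>
                Real.sqrt (∑ m, θ m * ‖∑ i, sgn (σ t i) • φ m t i‖ ^ 2)) := by
      intro θ hθ hθr
      obtain ⟨lam, hlam0, hlams, hlameq⟩ := hoelder_achieve hT hs
        (fun t => Real.sqrt (∑ m, θ m * ‖∑ i, sgn (σ t i) • φ m t i‖ ^ 2))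
        (fun t => Real.sqrt_nonneg _)
      set b : Fin T → ℝ :=
        fun t => Real.sqrt (∑ m, θ m * ‖∑ i, sgn (σ t i) • φ m t i‖ ^ 2) with hbdef
      have hb2 : ∀ t, b t ^ 2 = ∑ m, θ m * ‖∑ i, sgn (σ t i) • φ m t i‖ ^ 2 := by
        intro t
        simp only [hbdef]
        exact Real.sq_sqrt (hXnn θ hθ t)
      have hbnn : ∀ t, 0 ≤ b t := by
        intro t; simp only [hbdef]; exact Real.sqrt_nonneg _
      refine ⟨fun t m => if b t = 0 then 0 else
          ((lam t * Real.sqrt R * Real.sqrt (θ m)) / b t) • (∑ i, sgn (σ t i) • φ m t i),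
        lam, ⟨hθ, hθr, hlam0, hlams, ?_⟩, ?_⟩
      · intro t
        by_cases hbt : b t = 0
        · simp only [if_pos hbt, norm_zero]
          have : (∑ _m : Fin M, (0:ℝ) ^ 2) = 0 := by simp
          rw [this]
          positivity
        · have heq : (∑ m, ‖(if b t = 0 then 0 else
              ((lam t * Real.sqrt R * Real.sqrt (θ m)) / b t) •
                (∑ i, sgn (σ t i) • φ m t i) : H m)‖ ^ 2)
              = (lam t ^ 2 * R / b t ^ 2) *
                  ∑ m, θ m * ‖∑ i, sgn (σ t i) • φ m t i‖ ^ 2 := by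
            rw [Finset.mul_sum]
            refine Finset.sum_congr rfl fun m _ => ?_
            rw [if_neg hbt, norm_smul, Real.norm_eq_abs, mul_pow, sq_abs]
            have e1 : ((lam t * Real.sqrt R * Real.sqrt (θ m)) / b t) ^ 2
                = lam t ^ 2 * R * θ m / b t ^ 2 := by
              rw [div_pow, mul_pow, mul_pow, Real.sq_sqrt hR.le, Real.sq_sqrt (hθ m)]
            rw [e1]; ring
          rw [heq, ← hb2 t, div_mul_cancel₀ _ (pow_ne_zero 2 hbt)]
      · have hvt : ∀ t, (∑ m, Real.sqrt (θ m) * ⟪(if b t = 0 then 0 else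
            ((lam t * Real.sqrt R * Real.sqrt (θ m)) / b t) •
              (∑ i, sgn (σ t i) • φ m t i) : H m), ∑ i, sgn (σ t i) • φ m t i⟫)
            = lam t * Real.sqrt R * b t := by
          intro t
          by_cases hbt : b t = 0
          · simp [hbt]
          · calc (∑ m, Real.sqrt (θ m) * ⟪(if b t = 0 then 0 else
                ((lam t * Real.sqrt R * Real.sqrt (θ m)) / b t) •
                  (∑ i, sgn (σ t i) • φ m t i) : H m), ∑ i, sgn (σ t i) • φ m t i⟫)
                = ∑ m, (lam t * Real.sqrt R / b t) *
                    (θ m * ‖∑ i, sgn (σ t i) • φ m t i‖ ^ 2) := by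
                  refine Finset.sum_congr rfl fun m _ => ?_
                  rw [if_neg hbt, real_inner_smul_left, real_inner_self_eq_norm_sq]
                  have hss : Real.sqrt (θ m) * Real.sqrt (θ m) = θ m :=
                    Real.mul_self_sqrt (hθ m)
                  linear_combination (lam t * Real.sqrt R / b t *
                    ‖∑ i, sgn (σ t i) • φ m t i‖ ^ 2) * hss
              _ = (lam t * Real.sqrt R / b t) *
                    ∑ m, θ m * ‖∑ i, sgn (σ t i) • φ m t i‖ ^ 2 := by
                  rw [Finset.mul_sum]
              _ = (lam t * Real.sqrt R / b t) * b t ^ 2 := by rw [hb2 t]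
              _ = lam t * Real.sqrt R * b t := by
                  field_simp
        calc (∑ t, ∑ i, sgn (σ t i) * ∑ m, Real.sqrt (θ m) *
              ⟪(if b t = 0 then 0 else ((lam t * Real.sqrt R * Real.sqrt (θ m)) / b t) •
                (∑ i, sgn (σ t i) • φ m t i) : H m), φ m t i⟫)
            = ∑ t, lam t * Real.sqrt R * b t := by
              refine Finset.sum_congr rfl fun t _ => ?_
              rw [L0 (fun t m => if b t = 0 then 0 else
                ((lam t * Real.sqrt R * Real.sqrt (θ m)) / b t) •
                  (∑ i, sgn (σ t i) • φ m t i)) θ t]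
              exact hvt t
          _ = Real.sqrt R * ∑ t, lam t * b t := by
              rw [Finset.mul_sum]
              exact Finset.sum_congr rfl fun t _ => by ring
          _ = Real.sqrt R * dualNorm s b := by rw [hlameq]
    have h0B : dualNorm s (fun t =>
        Real.sqrt (∑ m, (0: Fin M → ℝ) m * ‖∑ i, sgn (σ t i) • φ m t i‖ ^ 2)) = 0 := by
      have he : (fun t => Real.sqrt (∑ m, (0: Fin M → ℝ) m *
          ‖∑ i, sgn (σ t i) • φ m t i‖ ^ 2)) = fun _ : Fin T => (0:ℝ) := by
        funext t; simp
      rw [he, dualNorm_zero hT hs]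
    refine sSup_eq_of_mul _ _ _ hK0 ?_ ?_ ?_ ?_ ?_
    · refine ⟨0, 0, 0, 0, ⟨fun m => le_rfl, ?_, fun t => le_rfl, ?_, ?_⟩, ?_⟩
      · simp [Real.zero_rpow hrne]
      · simp [Real.zero_rpow hsne]
      · intro t; simp
      · simp
    · exact ⟨0, 0, fun m => le_rfl, by simp [Real.zero_rpow hrne], h0B.symm⟩
    · refine ⟨dualNorm s (fun t =>
        Real.sqrt (∑ m, ‖∑ i, sgn (σ t i) • φ m t i‖ ^ 2)), ?_⟩
      rintro v ⟨θ, hθ, hθr, rfl⟩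
      refine dualNorm_mono hT hs fun t => ?_
      rw [abs_of_nonneg (Real.sqrt_nonneg _), abs_of_nonneg (Real.sqrt_nonneg _)]
      refine Real.sqrt_le_sqrt (Finset.sum_le_sum fun m _ => ?_)
      exact mul_le_of_le_one_left (sq_nonneg _) (hθ1 θ hθ hθr m)
    · rintro v ⟨w, θ, lam, hadm, rfl⟩
      refine ⟨dualNorm s (fun t =>
        Real.sqrt (∑ m, θ m * ‖∑ i, sgn (σ t i) • φ m t i‖ ^ 2)),
        ⟨θ, hadm.1, hadm.2.1, rfl⟩, ?_⟩
      rw [mul_assoc]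
      exact mul_le_mul_of_nonneg_left (upper w θ lam hadm) hc0.le
    · rintro v ⟨θ, hθ, hθr, rfl⟩
      obtain ⟨w, lam, hadm, heq⟩ := achieve θ hθ hθr
      exact ⟨w, θ, lam, hadm, by rw [mul_assoc, ← heq]⟩
  have pull : ∀ (k : ℝ) (f : (Fin T → Fin N → Bool) → ℝ),
      Eσ T N (fun σ => k * f σ) = k * Eσ T N f := by
    intro k f; unfold Eσ; rw [← Finset.mul_sum, mul_div_assoc]
  rw [show (2:ℝ) * Real.sqrt R / ((T:ℝ)*N) = 2/((T:ℝ)*N) * Real.sqrt R from by ring,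
    ← pull]
  unfold ERCmk
  exact congrArg (Eσ T N) (funext main)

end
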